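/- Let Z : ℝ → Matrix (Fin n) (Fin m) ℝ be twice differentiable with Z(0) = 0, and write μ = Z'(0). Define g(s) = 1 + Z(s)·Z(s)ᵀ (an n × n matrix) and h(s) = (det g(s))^{-1/2}. Then: (i) g_{ij}'(0) = 0 and g_{ij}''(0) = 2 Σ_α μ_{iα} μ_{jα} for all i, j; (ii) h'(0) = 0 and h''(0) = − Σ_{i,α} μ_{iα}². -/

import Mathlib

open Matrix

/-- A 2-jet predicate: `f 0 = a`, `f' 0 = b`, `f'' 0 = c`, with `f` differentiable
everywhere and its derivative differentiable at `0`. -/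
def Jet2 (f : ℝ → ℝ) (a b c : ℝ) : Prop :=
  ∃ f' : ℝ → ℝ, (∀ s, HasDerivAt f (f' s) s) ∧ HasDerivAt f' c 0 ∧ f 0 = a ∧ f' 0 = b

theorem Jet2.const (a : ℝ) : Jet2 (fun _ => a) a 0 0 :=
  ⟨fun _ => 0, fun s => hasDerivAt_const s a, hasDerivAt_const 0 0, rfl, rfl⟩

theorem Jet2.add {f g : ℝ → ℝ} {a b c a' b' c' : ℝ}
    (hf : Jet2 f a b c) (hg : Jet2 g a' b' c') :
    Jet2 (fun s => f s + g s) (a + a') (b + b') (c + c') := by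
  obtain ⟨F, hF1, hF2, hF3, hF4⟩ := hf
  obtain ⟨G, hG1, hG2, hG3, hG4⟩ := hg
  exact ⟨fun s => F s + G s, fun s => (hF1 s).add (hG1 s), hF2.add hG2,
    by simp [hF3, hG3], by simp [hF4, hG4]⟩

theorem Jet2.mul {f g : ℝ → ℝ} {a b c a' b' c' : ℝ}
    (hf : Jet2 f a b c) (hg : Jet2 g a' b' c') :
    Jet2 (fun s => f s * g s) (a * a') (a * b' + b * a')
      (a * c' + 2 * b * b' + c * a') := by
  obtain ⟨F, hF1, hF2, hF3, hF4⟩ := hf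
  obtain ⟨G, hG1, hG2, hG3, hG4⟩ := hg
  refine ⟨fun s => F s * g s + f s * G s, fun s => (hF1 s).mul (hG1 s), ?_,
    by simp [hF3, hG3], by simp only []; rw [hF4, hG3, hF3, hG4]; ring⟩
  have h := (hF2.mul (hG1 0)).add ((hF1 0).mul hG2)
  rw [hF3, hF4, hG3, hG4] at h
  exact h.congr_deriv (by ring)

theorem Jet2.cmul {f : ℝ → ℝ} {a b c : ℝ} (k : ℝ) (hf : Jet2 f a b c) :
    Jet2 (fun s => k * f s) (k * a) (k * b) (k * c) := by
  have h := (Jet2.const k).mul hf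
  simpa using h

theorem Jet2.mul00 {f g : ℝ → ℝ} {c c' : ℝ} (hf : Jet2 f 0 0 c) (hg : Jet2 g 0 0 c') :
    Jet2 (fun s => f s * g s) 0 0 0 := by
  simpa using hf.mul hg

theorem Jet2.mul0l {f g : ℝ → ℝ} {c a b c' : ℝ} (hf : Jet2 f 0 0 c) (hg : Jet2 g a b c') :
    Jet2 (fun s => f s * g s) 0 0 (c * a) := by
  simpa using hf.mul hg

theorem Jet2.congr {f g : ℝ → ℝ} {a b c : ℝ} (h : Jet2 f a b c)
    (hfg : ∀ s, g s = f s) : Jet2 g a b c := by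
  have hgf : g = f := funext hfg
  rw [hgf]; exact h

theorem Jet2.sum {ι : Type*} (s : Finset ι) (f : ι → ℝ → ℝ) (a b c : ι → ℝ)
    (h : ∀ i ∈ s, Jet2 (f i) (a i) (b i) (c i)) :
    Jet2 (fun x => ∑ i ∈ s, f i x) (∑ i ∈ s, a i) (∑ i ∈ s, b i) (∑ i ∈ s, c i) := by
  classical
  induction s using Finset.induction_on with
  | empty => simpa using Jet2.const 0
  | @insert j t hj ih =>
      simp only [Finset.sum_insert hj]
      exact (h _ (Finset.mem_insert_self _ _)).add
        (ih fun i hi => h i (Finset.mem_insert_of_mem hi))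

theorem Jet2.prod_one {ι : Type*} (s : Finset ι) (f : ι → ℝ → ℝ) (c : ι → ℝ)
    (h : ∀ i ∈ s, Jet2 (f i) 1 0 (c i)) :
    Jet2 (fun x => ∏ i ∈ s, f i x) 1 0 (∑ i ∈ s, c i) := by
  classical
  induction s using Finset.induction_on with
  | empty => simpa using Jet2.const 1
  | @insert j t hj ih =>
      simp only [Finset.prod_insert hj, Finset.sum_insert hj]
      have := (h _ (Finset.mem_insert_self _ _)).mul
        (ih fun i hi => h i (Finset.mem_insert_of_mem hi))
      simpa [add_comm] using this

theorem Jet2.prod_ex {ι : Type*} (s : Finset ι) (f : ι → ℝ → ℝ)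
    (h : ∀ i ∈ s, ∃ a b c, Jet2 (f i) a b c) :
    ∃ a b c, Jet2 (fun x => ∏ i ∈ s, f i x) a b c := by
  classical
  induction s using Finset.induction_on with
  | empty => exact ⟨1, 0, 0, by simpa using Jet2.const 1⟩
  | @insert j t hj ih =>
      obtain ⟨a, b, c, hj'⟩ := h _ (Finset.mem_insert_self _ _)
      obtain ⟨a', b', c', ht⟩ := ih fun i hi => h i (Finset.mem_insert_of_mem hi)
      exact ⟨_, _, _, by simpa only [Finset.prod_insert hj] using hj'.mul ht⟩

theorem Jet2.deriv_zero {f : ℝ → ℝ} {a b c : ℝ} (hf : Jet2 f a b c) : deriv f 0 = b := by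
  obtain ⟨F, hF1, _, _, hF4⟩ := hf
  rw [show deriv f = F from funext fun s => (hF1 s).deriv]
  exact hF4

theorem Jet2.deriv_deriv_zero {f : ℝ → ℝ} {a b c : ℝ} (hf : Jet2 f a b c) :
    deriv (deriv f) 0 = c := by
  obtain ⟨F, hF1, hF2, _, _⟩ := hf
  rw [show deriv f = F from funext fun s => (hF1 s).deriv]
  exact hF2.deriv
theorem metric_determinant_variation (n m : ℕ)
    (Z : ℝ → Matrix (Fin n) (Fin m) ℝ)
    (hZ₁ : ∀ i α, Differentiable ℝ fun s => Z s i α)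
    (hZ₂ : ∀ i α, Differentiable ℝ (deriv fun s => Z s i α))
    (hZ0 : Z 0 = 0)
    (μ : Matrix (Fin n) (Fin m) ℝ)
    (hμ : ∀ i α, μ i α = deriv (fun s => Z s i α) 0) :
    (∀ i j : Fin n,
        deriv (fun s : ℝ => (1 + Z s * (Z s)ᵀ : Matrix (Fin n) (Fin n) ℝ) i j) 0 = 0 ∧
        deriv (deriv fun s : ℝ => (1 + Z s * (Z s)ᵀ : Matrix (Fin n) (Fin n) ℝ) i j) 0
          = 2 * ∑ α, μ i α * μ j α) ∧
    deriv (fun s : ℝ => Matrix.det (1 + Z s * (Z s)ᵀ) ^ (-(1 / 2) : ℝ)) 0 = 0 ∧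
    deriv (deriv fun s : ℝ => Matrix.det (1 + Z s * (Z s)ᵀ) ^ (-(1 / 2) : ℝ)) 0
      = -∑ i : Fin n, ∑ α : Fin m, μ i α ^ 2 := by
  classical
  -- jets of the entries of Z
  have hp : ∀ i α, Jet2 (fun s => Z s i α) 0 (μ i α)
      (deriv (deriv fun s => Z s i α) 0) := by
    intro i α
    exact ⟨deriv (fun s => Z s i α), fun s => ((hZ₁ i α) s).hasDerivAt,
      ((hZ₂ i α) 0).hasDerivAt, by simp [hZ0], (hμ i α).symm⟩
  -- entries of the metric
  set e : Fin n → Fin n → ℝ → ℝ :=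
    fun i j s => (1 + Z s * (Z s)ᵀ : Matrix (Fin n) (Fin n) ℝ) i j with he_def
  have he_eq : ∀ i j, e i j = fun s =>
      (if i = j then (1:ℝ) else 0) + ∑ α, Z s i α * Z s j α := by
    intro i j
    funext s
    simp [he_def, Matrix.add_apply, Matrix.one_apply, Matrix.mul_apply,
      Matrix.transpose_apply]
  have he : ∀ i j, Jet2 (e i j) (if i = j then (1:ℝ) else 0) 0
      (2 * ∑ α, μ i α * μ j α) := by
    intro i j
    have h1 : Jet2 (fun s => ∑ α, Z s i α * Z s j α) (∑ _α : Fin m, (0:ℝ))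
        (∑ _α : Fin m, (0:ℝ)) (∑ α, 2 * μ i α * μ j α) := by
      refine Jet2.sum _ _ _ _ _ fun α _ => ?_
      simpa using (hp i α).mul (hp j α)
    have h2 := (Jet2.const (if i = j then (1:ℝ) else 0)).add h1
    rw [he_eq i j]
    simpa [Finset.mul_sum, mul_assoc] using h2
  refine ⟨fun i j => ⟨(he i j).deriv_zero, (he i j).deriv_deriv_zero⟩, ?_⟩
  -- jet of the determinant
  set C : ℝ := ∑ i : Fin n, 2 * ∑ α, μ i α * μ i α with hC_def
  have hterm : ∀ σ : Equiv.Perm (Fin n),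
      Jet2 (fun s => ((Equiv.Perm.sign σ : ℤ) : ℝ) * ∏ i, e (σ i) i s)
        (if σ = 1 then 1 else 0) 0 (if σ = 1 then C else 0) := by
    intro σ
    by_cases hσ : σ = 1
    · subst hσ
      have h1 := Jet2.prod_one Finset.univ (fun i => e i i)
        (fun i => 2 * ∑ α, μ i α * μ i α) (fun i _ => by simpa using he i i)
      have h2 := h1.cmul (((Equiv.Perm.sign (1 : Equiv.Perm (Fin n)) : ℤ) : ℝ))
      simpa [hC_def] using h2
    · obtain ⟨i, hi⟩ : ∃ i, σ i ≠ i := by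
        by_contra h
        push_neg at h
        exact hσ (Equiv.ext h)
      have hji : σ i ≠ i := hi
      have hj : σ (σ i) ≠ σ i := fun h => hi (σ.injective h)
      have hFi : Jet2 (e (σ i) i) 0 0 (2 * ∑ α, μ (σ i) α * μ i α) := by
        simpa [hi] using he (σ i) i
      have hFj : Jet2 (e (σ (σ i)) (σ i)) 0 0 (2 * ∑ α, μ (σ (σ i)) α * μ (σ i) α) := by
        simpa [hj] using he (σ (σ i)) (σ i)
      obtain ⟨a, b, c, hrest⟩ := Jet2.prod_ex ((Finset.univ.erase i).erase (σ i))
        (fun k => e (σ k) k) (fun k _ => ⟨_, _, _, he (σ k) k⟩)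
      have hinner := hFj.mul0l hrest
      have houter := hFi.mul00 hinner
      have hsplit : ∀ s, (∏ k, e (σ k) k s) =
          e (σ i) i s * (e (σ (σ i)) (σ i) s *
            ∏ k ∈ (Finset.univ.erase i).erase (σ i), e (σ k) k s) := by
        intro s
        rw [← Finset.mul_prod_erase Finset.univ (fun k => e (σ k) k s)
            (Finset.mem_univ i),
          ← Finset.mul_prod_erase _ _
            (Finset.mem_erase.mpr ⟨hji, Finset.mem_univ (σ i)⟩)]
      have hfin := houter.cmul (((Equiv.Perm.sign σ : ℤ) : ℝ))
      rw [if_neg hσ, if_neg hσ]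
      exact Jet2.congr (by simpa using hfin) (fun s => by rw [hsplit s])
  have hsum := Jet2.sum Finset.univ
    (fun σ s => ((Equiv.Perm.sign σ : ℤ) : ℝ) * ∏ i, e (σ i) i s)
    (fun σ => if σ = 1 then 1 else 0) (fun _ => 0)
    (fun σ => if σ = 1 then C else 0) (fun σ _ => hterm σ)
  have hDfun : (fun s => Matrix.det (1 + Z s * (Z s)ᵀ : Matrix (Fin n) (Fin n) ℝ)) =
      fun s => ∑ σ : Equiv.Perm (Fin n),
        ((Equiv.Perm.sign σ : ℤ) : ℝ) * ∏ i, e (σ i) i s := by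
    funext s
    rw [Matrix.det_apply']
  have hD : Jet2 (fun s => Matrix.det (1 + Z s * (Z s)ᵀ : Matrix (Fin n) (Fin n) ℝ))
      1 0 C := by
    rw [hDfun]
    simpa using hsum
  obtain ⟨D', hD1, hD2, hD3, hD4⟩ := hD
  set D : ℝ → ℝ := fun s => Matrix.det (1 + Z s * (Z s)ᵀ : Matrix (Fin n) (Fin n) ℝ)
    with hDdef
  set p : ℝ := -(1/2) with hp_def
  have hHder : ∀ x : ℝ, 0 < D x →
      HasDerivAt (fun s => D s ^ p) (D' x * p * D x ^ (p - 1)) x :=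
    fun x hx => (hD1 x).rpow_const (Or.inl hx.ne')
  have hD0pos : (0:ℝ) < D 0 := by rw [hD3]; norm_num
  have hU : ∀ᶠ x in nhds (0:ℝ), 0 < D x := by
    have hcont : ContinuousAt D 0 := (hD1 0).differentiableAt.continuousAt
    have := hcont.preimage_mem_nhds (Ioi_mem_nhds hD0pos)
    exact this
  constructor
  · have := (hHder 0 hD0pos).deriv
    rw [show (fun s : ℝ => Matrix.det (1 + Z s * (Z s)ᵀ) ^ (-(1 / 2) : ℝ)) =
      (fun s => D s ^ p) from rfl]
    rw [this, hD4]
    ring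
  · have hev : deriv (fun s => D s ^ p) =ᶠ[nhds (0:ℝ)]
        (fun x => D' x * p * D x ^ (p - 1)) :=
      hU.mono fun x hx => (hHder x hx).deriv
    have h1 : HasDerivAt (fun x => D' x * p) (C * p) 0 := hD2.mul_const p
    have h2 : HasDerivAt (fun x => D x ^ (p - 1))
        (D' 0 * (p - 1) * D 0 ^ (p - 1 - 1)) 0 :=
      (hD1 0).rpow_const (Or.inl (by rw [hD3]; norm_num))
    have h3 : HasDerivAt (fun x => D' x * p * D x ^ (p - 1)) _ 0 := h1.mul h2
    rw [show (deriv fun s : ℝ => Matrix.det (1 + Z s * (Z s)ᵀ) ^ (-(1 / 2) : ℝ)) =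
      (deriv fun s => D s ^ p) from rfl]
    rw [hev.deriv_eq, h3.deriv, hD3, hD4]
    have hCval : C = 2 * ∑ i : Fin n, ∑ α, μ i α ^ 2 := by
      rw [hC_def, Finset.mul_sum]
      refine Finset.sum_congr rfl fun i _ => ?_
      rw [Finset.mul_sum, Finset.mul_sum]
      exact Finset.sum_congr rfl fun α _ => by ring
    rw [hCval, Real.one_rpow, hp_def]
    ring
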